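/- Every weighted congestion game with polynomial latency functions of maximum degree d with non-negative coefficients has a d!-approximate pure Nash equilibrium. -/

import Mathlib

open Finset

variable {n : ℕ} {E : Type*} [Fintype E] [DecidableEq E]

/-- `PsiW w k P = k! ·` (sum of all monomials of total degree `k` in the
weights of the players in `P`). -/
noncomputable def PsiW (w : Fin n → ℝ) (k : ℕ) (P : Finset (Fin n)) : ℝ :=
  (Nat.factorial k : ℝ) * ∑ m ∈ P.sym k, ((m : Multiset (Fin n)).map w).prod

/-- A weighted congestion game with `n` players, resources `E`, and polynomial
latency functions of maximum degree `d` with non-negative coefficients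
`a e k` (for `k ≤ d`). The same data also describes the corresponding Ψ-game. -/
structure WCGame (n : ℕ) (E : Type*) [Fintype E] (d : ℕ) where
  /-- weights of the players -/
  w : Fin n → ℝ
  w_pos : ∀ u, 0 < w u
  /-- strategy sets: nonempty collections of nonempty sets of resources -/
  strat : Fin n → Finset (Finset E)
  strat_ne : ∀ u, (strat u).Nonempty
  strat_mem_ne : ∀ u, ∀ s ∈ strat u, s.Nonempty
  /-- coefficients of the latency functions -/
  a : E → ℕ → ℝ
  a_nonneg : ∀ e k, 0 ≤ a e k

namespace WCGame

variable {d : ℕ} (G : WCGame n E d)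

/-- A state assigns a strategy to every player. -/
def IsState (S : Fin n → Finset E) : Prop := ∀ u, S u ∈ G.strat u

/-- The set of players using resource `e` in state `S`. -/
def users (S : Fin n → Finset E) (e : E) : Finset (Fin n) :=
  univ.filter fun u => e ∈ S u

/-- The cost of player `u` in the weighted congestion game. -/
noncomputable def cost (S : Fin n → Finset E) (u : Fin n) : ℝ :=
  G.w u * ∑ e ∈ S u, ∑ k ∈ Finset.range (d + 1),
    G.a e k * ((users S e).sum G.w) ^ k

/-- The cost of player `u` in the corresponding Ψ-game. -/
noncomputable def pcost (S : Fin n → Finset E) (u : Fin n) : ℝ :=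
  G.w u * ∑ e ∈ S u, ∑ k ∈ Finset.range (d + 1),
    G.a e k * PsiW G.w k (users S e)

/-- The potential of the subgame induced by the players in `C`. -/
noncomputable def potOn (C : Finset (Fin n)) (S : Fin n → Finset E) : ℝ :=
  ∑ e : E, ∑ k ∈ Finset.range (d + 1),
    G.a e k / (k + 1) * PsiW G.w (k + 1) (users S e ∩ C)

/-- The potential function of the Ψ-game. -/
noncomputable def pot (S : Fin n → Finset E) : ℝ := G.potOn univ S

end WCGame

/-! ### Auxiliary lemmas -/

/-- The complete homogeneous sum of degree `k` in the weights of players in `P`. -/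
noncomputable def hsum {n : ℕ} (w : Fin n → ℝ) (k : ℕ) (P : Finset (Fin n)) : ℝ :=
  ∑ m ∈ P.sym k, ((m : Multiset (Fin n)).map w).prod

lemma PsiW_eq_hsum {n : ℕ} (w : Fin n → ℝ) (k : ℕ) (P : Finset (Fin n)) :
    PsiW w k P = (Nat.factorial k : ℝ) * hsum w k P := rfl

theorem hrec {n : ℕ} (w : Fin n → ℝ) (k : ℕ) {P : Finset (Fin n)} {u : Fin n} (hu : u ∉ P) :
    hsum w (k+1) (insert u P) = hsum w (k+1) P + w u * hsum w k (insert u P) := by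
  classical
  rw [hsum, ← Finset.sum_filter_add_sum_filter_not _ (fun m => u ∈ m)]
  have h1 : Finset.filter (fun m => ¬ u ∈ m) ((insert u P).sym (k+1)) = P.sym (k+1) := by
    ext m
    simp only [Finset.mem_filter, Finset.mem_sym_iff, Finset.mem_insert]
    constructor
    · rintro ⟨h, hm⟩ a ha
      rcases h a ha with rfl | h'
      · exact absurd ha hm
      · exact h'
    · intro h
      refine ⟨fun a ha => Or.inr (h a ha), fun hm => hu (h u hm)⟩
  have h2 : ∑ m ∈ Finset.filter (fun m => u ∈ m) ((insert u P).sym (k+1)),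
      ((m : Multiset (Fin n)).map w).prod = w u * hsum w k (insert u P) := by
    rw [hsum, Finset.mul_sum]
    refine Finset.sum_nbij' (fun m => if h : u ∈ m then m.erase u h else Sym.replicate k u)
      (fun m => u ::ₛ m) ?_ ?_ ?_ ?_ ?_
    · intro m hm
      simp only [Finset.mem_filter] at hm
      beta_reduce
      rw [dif_pos hm.2]
      rw [Finset.mem_sym_iff]
      intro a ha
      have ha' : a ∈ ((m : Multiset (Fin n)).erase u) := by
        rw [← Sym.coe_erase hm.2]; exact Sym.mem_coe.mpr ha
      exact (Finset.mem_sym_iff.1 hm.1) a (Multiset.mem_of_mem_erase ha')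
    · intro m hm
      simp only [Finset.mem_filter]
      refine ⟨Finset.mem_sym_iff.2 fun a ha => ?_, Sym.mem_cons_self u m⟩
      rcases Sym.mem_cons.1 ha with rfl | h'
      · exact Finset.mem_insert_self _ _
      · exact Finset.mem_sym_iff.1 hm a h'
    · intro m hm
      simp only [Finset.mem_filter] at hm
      beta_reduce
      rw [dif_pos hm.2]
      exact Sym.cons_erase hm.2
    · intro m hm
      beta_reduce
      rw [dif_pos (Sym.mem_cons_self u m)]
      exact Sym.erase_cons_head m u
    · intro m hm
      simp only [Finset.mem_filter] at hm
      beta_reduce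
      rw [dif_pos hm.2, Sym.coe_erase hm.2]
      have hum : u ∈ (m : Multiset (Fin n)) := Sym.mem_coe.mpr hm.2
      conv_lhs => rw [← Multiset.cons_erase hum]
      simp
  rw [h1, h2, add_comm]
  rfl

lemma multinomial_le_factorial {α : Type*} [DecidableEq α] (m : Multiset α) :
    m.countPerms ≤ (Multiset.card m).factorial := by
  have h := Nat.multinomial_spec m.toFinsupp.support m.toFinsupp
  have hsum : ∑ i ∈ m.toFinsupp.support, m.toFinsupp i = Multiset.card m := by
    simp [Multiset.toFinsupp_apply, Multiset.toFinset_sum_count_eq]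
  rw [hsum] at h
  calc m.countPerms = 1 * m.countPerms := (one_mul _).symm
    _ ≤ (∏ i ∈ m.toFinsupp.support, (m.toFinsupp i).factorial) * m.countPerms :=
        Nat.mul_le_mul_right _ (Nat.one_le_iff_ne_zero.2 (by positivity))
    _ = _ := h

lemma prod_map_nonneg {n : ℕ} {w : Fin n → ℝ} (hw : ∀ u, 0 ≤ w u)
    (m : Multiset (Fin n)) : 0 ≤ (m.map w).prod := by
  refine Multiset.prod_nonneg fun x hx => ?_
  obtain ⟨a, -, rfl⟩ := Multiset.mem_map.1 hx
  exact hw a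

lemma hsum_nonneg {n : ℕ} {w : Fin n → ℝ} (hw : ∀ u, 0 ≤ w u) (k : ℕ)
    (P : Finset (Fin n)) : 0 ≤ hsum w k P :=
  Finset.sum_nonneg fun m _ => prod_map_nonneg hw _

lemma pow_le_fact_mul_hsum {n : ℕ} {w : Fin n → ℝ} (hw : ∀ u, 0 ≤ w u) (k : ℕ)
    (P : Finset (Fin n)) : (P.sum w) ^ k ≤ (Nat.factorial k : ℝ) * hsum w k P := by
  classical
  rw [Finset.sum_pow, hsum, Finset.mul_sum]
  refine Finset.sum_le_sum fun m _ => ?_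
  have hcard : Multiset.card (m : Multiset (Fin n)) = k := m.2
  have h1 : ((m : Multiset (Fin n)).countPerms : ℝ) ≤ (Nat.factorial k : ℝ) := by
    exact_mod_cast hcard ▸ multinomial_le_factorial (m : Multiset (Fin n))
  exact mul_le_mul_of_nonneg_right h1 (prod_map_nonneg hw _)

lemma hsum_le_pow {n : ℕ} {w : Fin n → ℝ} (hw : ∀ u, 0 ≤ w u) (k : ℕ)
    (P : Finset (Fin n)) : hsum w k P ≤ (P.sum w) ^ k := by
  classical
  rw [Finset.sum_pow, hsum]
  refine Finset.sum_le_sum fun m _ => ?_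
  have h1 : (1 : ℝ) ≤ ((m : Multiset (Fin n)).countPerms : ℝ) := by
    exact_mod_cast Nat.multinomial_pos _ _
  calc ((m : Multiset (Fin n)).map w).prod = 1 * _ := (one_mul _).symm
    _ ≤ _ := mul_le_mul_of_nonneg_right h1 (prod_map_nonneg hw _)

lemma pot_split {n : ℕ} {E : Type*} [Fintype E] [DecidableEq E] {d : ℕ}
    (G : WCGame n E d) (S : Fin n → Finset E) (u : Fin n) :
    G.pot S = G.pcost S u + ∑ e : E, ∑ k ∈ Finset.range (d+1),
      G.a e k * (Nat.factorial k : ℝ) * hsum G.w (k+1) ((WCGame.users S e).erase u) := by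
  classical
  have key : ∀ e : E, ∀ k ∈ Finset.range (d+1),
      G.a e k / (k+1) * PsiW G.w (k+1) (WCGame.users S e) =
      (if e ∈ S u then G.w u * (G.a e k * PsiW G.w k (WCGame.users S e)) else 0)
        + G.a e k * (Nat.factorial k : ℝ) * hsum G.w (k+1) ((WCGame.users S e).erase u) := by
    intro e k _
    have hk1 : ((k : ℝ) + 1) ≠ 0 := by positivity
    have hfact : G.a e k / (k+1) * (Nat.factorial (k+1) : ℝ) =
        G.a e k * (Nat.factorial k : ℝ) := by
      rw [Nat.factorial_succ]
      push_cast
      field_simp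
    rw [PsiW_eq_hsum, PsiW_eq_hsum]
    by_cases he : e ∈ S u
    · have hmem : u ∈ WCGame.users S e := by simp [WCGame.users, he]
      have hrec' := hrec G.w k (Finset.notMem_erase u (WCGame.users S e))
      rw [Finset.insert_erase hmem] at hrec'
      rw [if_pos he, ← mul_assoc, hfact, hrec']
      ring
    · have hmem : u ∉ WCGame.users S e := by simp [WCGame.users, he]
      rw [Finset.erase_eq_of_notMem hmem, if_neg he, ← mul_assoc, hfact, zero_add]
  have step1 : G.pot S = ∑ e : E, ∑ k ∈ Finset.range (d+1),
      ((if e ∈ S u then G.w u * (G.a e k * PsiW G.w k (WCGame.users S e)) else 0)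
        + G.a e k * (Nat.factorial k : ℝ) * hsum G.w (k+1) ((WCGame.users S e).erase u)) := by
    rw [WCGame.pot, WCGame.potOn]
    simp only [Finset.inter_univ]
    exact Finset.sum_congr rfl fun e _ => Finset.sum_congr rfl (key e)
  rw [step1]
  simp only [Finset.sum_add_distrib]
  congr 1
  have h1 : ∀ e : E, (∑ k ∈ Finset.range (d+1),
      if e ∈ S u then G.w u * (G.a e k * PsiW G.w k (WCGame.users S e)) else 0) =
      if e ∈ S u then
        ∑ k ∈ Finset.range (d+1), G.w u * (G.a e k * PsiW G.w k (WCGame.users S e))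
      else 0 := fun e => by split_ifs <;> simp
  rw [Finset.sum_congr rfl fun e _ => h1 e, Finset.sum_ite_mem, Finset.univ_inter,
    WCGame.pcost, Finset.mul_sum]
  exact Finset.sum_congr rfl fun e _ => (Finset.mul_sum _ _ _).symm

lemma cost_le_pcost {n : ℕ} {E : Type*} [Fintype E] [DecidableEq E] {d : ℕ}
    (G : WCGame n E d) (S : Fin n → Finset E) (u : Fin n) :
    G.cost S u ≤ G.pcost S u := by
  have hw : ∀ v, 0 ≤ G.w v := fun v => (G.w_pos v).le
  refine mul_le_mul_of_nonneg_left (Finset.sum_le_sum fun e _ =>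
    Finset.sum_le_sum fun k _ => ?_) (hw u)
  rw [PsiW_eq_hsum]
  exact mul_le_mul_of_nonneg_left (pow_le_fact_mul_hsum hw k _) (G.a_nonneg e k)

lemma pcost_le_fact_mul_cost {n : ℕ} {E : Type*} [Fintype E] [DecidableEq E] {d : ℕ}
    (G : WCGame n E d) (S : Fin n → Finset E) (u : Fin n) :
    G.pcost S u ≤ (Nat.factorial d : ℝ) * G.cost S u := by
  have hw : ∀ v, 0 ≤ G.w v := fun v => (G.w_pos v).le
  have hY : (∑ e ∈ S u, ∑ k ∈ Finset.range (d+1), G.a e k * PsiW G.w k (WCGame.users S e))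
      ≤ (Nat.factorial d : ℝ) *
        ∑ e ∈ S u, ∑ k ∈ Finset.range (d+1),
          G.a e k * ((WCGame.users S e).sum G.w) ^ k := by
    rw [Finset.mul_sum]
    refine Finset.sum_le_sum fun e _ => ?_
    rw [Finset.mul_sum]
    refine Finset.sum_le_sum fun k hk => ?_
    have hk' : k ≤ d := by
      have := Finset.mem_range.1 hk; omega
    have hL : (0 : ℝ) ≤ ((WCGame.users S e).sum G.w) ^ k :=
      pow_nonneg (Finset.sum_nonneg fun v _ => hw v) k
    have h1 : PsiW G.w k (WCGame.users S e) ≤ (Nat.factorial d : ℝ) *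
        ((WCGame.users S e).sum G.w) ^ k := by
      rw [PsiW_eq_hsum]
      calc (Nat.factorial k : ℝ) * hsum G.w k (WCGame.users S e)
          ≤ (Nat.factorial k : ℝ) * ((WCGame.users S e).sum G.w) ^ k :=
            mul_le_mul_of_nonneg_left (hsum_le_pow hw k _) (by positivity)
        _ ≤ (Nat.factorial d : ℝ) * ((WCGame.users S e).sum G.w) ^ k := by
            refine mul_le_mul_of_nonneg_right ?_ hL
            exact_mod_cast Nat.factorial_le hk'
    calc G.a e k * PsiW G.w k (WCGame.users S e)
        ≤ G.a e k * ((Nat.factorial d : ℝ) * ((WCGame.users S e).sum G.w) ^ k) :=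
          mul_le_mul_of_nonneg_left h1 (G.a_nonneg e k)
      _ = (Nat.factorial d : ℝ) * (G.a e k * ((WCGame.users S e).sum G.w) ^ k) := by ring
  calc G.pcost S u = G.w u * _ := rfl
    _ ≤ G.w u * ((Nat.factorial d : ℝ) *
        ∑ e ∈ S u, ∑ k ∈ Finset.range (d+1),
          G.a e k * ((WCGame.users S e).sum G.w) ^ k) :=
        mul_le_mul_of_nonneg_left hY (G.w_pos u).le
    _ = (Nat.factorial d : ℝ) * G.cost S u := by rw [WCGame.cost]; ring

theorem stmt14 {n : ℕ} {E : Type*} [Fintype E] [DecidableEq E] {d : ℕ}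
    (G : WCGame n E d) :
    ∃ S : Fin n → Finset E, G.IsState S ∧
      ∀ u : Fin n, ∀ s' ∈ G.strat u,
        G.cost S u ≤ (Nat.factorial d : ℝ) * G.cost (Function.update S u s') u := by
  classical
  obtain ⟨S, hS, hmin⟩ : ∃ S, G.IsState S ∧ ∀ T, G.IsState T → G.pot S ≤ G.pot T := by
    have hne : (Finset.univ.filter fun S : Fin n → Finset E => G.IsState S).Nonempty := by
      refine ⟨fun u => (G.strat_ne u).choose, ?_⟩
      simp only [Finset.mem_filter, Finset.mem_univ, true_and]
      exact fun u => (G.strat_ne u).choose_spec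
    obtain ⟨S, hSmem, hmin⟩ := Finset.exists_min_image _ G.pot hne
    simp only [Finset.mem_filter, Finset.mem_univ, true_and] at hSmem
    exact ⟨S, hSmem, fun T hT => hmin T (by simp [hT])⟩
  refine ⟨S, hS, fun u s' hs' => ?_⟩
  set S' := Function.update S u s' with hS'def
  have hS' : G.IsState S' := by
    intro v
    by_cases hv : v = u
    · subst hv; simpa [hS'def] using hs'
    · simpa [hS'def, Function.update_of_ne hv] using hS v
  have husers : ∀ e : E, (WCGame.users S' e).erase u = (WCGame.users S e).erase u := by
    intro e; ext v
    simp only [Finset.mem_erase, WCGame.users, Finset.mem_filter, Finset.mem_univ, true_and]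
    constructor
    · rintro ⟨hv, h2⟩
      exact ⟨hv, by rwa [hS'def, Function.update_of_ne hv] at h2⟩
    · rintro ⟨hv, h2⟩
      exact ⟨hv, by rwa [hS'def, Function.update_of_ne hv]⟩
  have hpc : G.pcost S u ≤ G.pcost S' u := by
    have hpot := hmin S' hS'
    rw [pot_split G S u, pot_split G S' u] at hpot
    have hrest : (∑ e : E, ∑ k ∈ Finset.range (d+1),
        G.a e k * (Nat.factorial k : ℝ) * hsum G.w (k+1) ((WCGame.users S' e).erase u)) =
        ∑ e : E, ∑ k ∈ Finset.range (d+1),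
        G.a e k * (Nat.factorial k : ℝ) * hsum G.w (k+1) ((WCGame.users S e).erase u) := by
      refine Finset.sum_congr rfl fun e _ => Finset.sum_congr rfl fun k _ => ?_
      rw [husers e]
    rw [hrest] at hpot
    linarith
  calc G.cost S u ≤ G.pcost S u := cost_le_pcost G S u
    _ ≤ G.pcost S' u := hpc
    _ ≤ (Nat.factorial d : ℝ) * G.cost S' u := pcost_le_fact_mul_cost G S' u
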